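/- Let k ≥ 1 and let G be a graph with minimum degree at least k/2 and maximum degree at least 2k. Then G contains every path with k edges as a subgraph. -/

import Mathlib

namespace SimpleGraph.Walk

variable {V : Type*} {G : SimpleGraph V}

private lemma getVert_inj_aux {u v : V} {p : G.Walk u v} (hp : p.IsPath) {i j : ℕ}
    (hi : i ≤ p.length) (hj : j ≤ p.length) (h : p.getVert i = p.getVert j) : i = j := by
  induction p generalizing i j with
  | nil => simp only [length_nil, Nat.le_zero] at hi hj; omega
  | @cons u x w hadj q ih =>
    rw [cons_isPath_iff] at hp
    match i, j with
    | 0, 0 => rfl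
    | 0, j+1 =>
      exfalso
      rw [getVert_zero, getVert_cons_succ] at h
      exact hp.2 (h ▸ mem_support_iff_exists_getVert.mpr
        ⟨j, rfl, by simpa [length_cons] using hj⟩)
    | i+1, 0 =>
      exfalso
      rw [getVert_zero, getVert_cons_succ] at h
      exact hp.2 (h ▸ mem_support_iff_exists_getVert.mpr
        ⟨i, rfl, by simpa [length_cons] using hi⟩)
    | i+1, j+1 =>
      rw [getVert_cons_succ, getVert_cons_succ] at h
      have := ih hp.1 (by simpa [length_cons] using hi) (by simpa [length_cons] using hj) h
      omega

/-- Bound the degree of a vertex all of whose neighbors lie on a path. -/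
private lemma ncard_le_length {a s t : V} {p : G.Walk s t} (hp : p.IsPath)
    (ha : a ∈ p.support) (h : ∀ z, G.Adj a z → z ∈ p.support) :
    (G.neighborSet a).ncard ≤ p.length := by
  classical
  have hsub : G.neighborSet a ⊆ ↑(p.support.toFinset.erase a) := by
    intro z hz
    simp only [Finset.coe_erase, Set.mem_diff, Set.mem_singleton_iff, List.coe_toFinset,
      Set.mem_setOf_eq]
    exact ⟨h z hz, fun hza => G.loopless.irrefl a (hza ▸ hz)⟩
  calc (G.neighborSet a).ncard ≤ ((p.support.toFinset.erase a : Finset V) : Set V).ncard :=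
        Set.ncard_le_ncard hsub (Set.toFinite _)
    _ = (p.support.toFinset.erase a).card := Set.ncard_coe_finset _
    _ = p.support.toFinset.card - 1 := Finset.card_erase_of_mem (by simpa using ha)
    _ ≤ p.support.length - 1 := by
        have := p.support.toFinset_card_le
        omega
    _ = p.length := by rw [length_support]; omega

/-- The key rotation step: given a path with a "crossing pair" of chords from its two
endpoints, and a vertex `v` on the path with a neighbor `w` off the path, there is a
path one longer (through `v`). -/
private lemma rotation_step [DecidableEq V] {a b v w : V} {p : G.Walk a b} (hp : p.IsPath)
    {i : ℕ} (hi : i < p.length)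
    (hA : G.Adj a (p.getVert (i+1))) (hB : G.Adj b (p.getVert i))
    (hv : v ∈ p.support) (hw : G.Adj v w) (hwp : w ∉ p.support) :
    ∃ (s t : V) (F : G.Walk s t), F.IsPath ∧ F.length = p.length + 1 ∧ v ∈ F.support := by
  set x := p.getVert i with hxdef
  have hx : x ∈ p.support := mem_support_iff_exists_getVert.mpr ⟨i, rfl, le_of_lt hi⟩
  set q1 := p.takeUntil x hx with hq1def
  set q2 := p.dropUntil x hx with hq2def
  have hspec : q1.append q2 = p := p.take_spec hx
  have hlenadd : q1.length + q2.length = p.length := by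
    rw [← hspec, length_append]
  have hq1len : q1.length = i := by
    have h0 : (q1.append q2).getVert q1.length = x := by
      rw [getVert_append]
      simp
    rw [hspec] at h0
    exact getVert_inj_aux hp (p.length_takeUntil_le hx) (le_of_lt hi) (h0.trans hxdef)
  have hq2nil : ¬ q2.Nil := by
    intro hnil
    rw [nil_iff_length_eq] at hnil
    omega
  obtain ⟨y, hxy, r, hq2⟩ := not_nil_iff.mp hq2nil
  have hy : y = p.getVert (i+1) := by
    have hgen : (q1.append q2).getVert (q1.length + 1) = q2.getVert 1 := by
      rw [getVert_append, if_neg (by omega)]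
      congr 1
      omega
    rw [hspec, hq1len] at hgen
    rw [hgen, hq2, getVert_cons_succ, getVert_zero]
  have hay : G.Adj a y := hy ▸ hA
  -- the Hamiltonian cycle on the support of p
  let c : G.Walk a a :=
    q1.append ((Walk.cons hB.symm r.reverse).append (Walk.cons hay.symm Walk.nil))
  have hps : p.support = q1.support ++ r.support := by
    rw [← hspec, support_append, hq2, support_cons, List.tail_cons]
  have hcs : c.support = q1.support ++ (r.reverse.support ++ [a]) := by
    show (q1.append _).support = _
    rw [support_append, support_append, support_cons, support_cons, support_nil,
      List.tail_cons, List.cons_append, List.tail_cons]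
  have hq1cons : q1.support = a :: q1.support.tail := support_eq_cons q1
  have htail : c.support.tail = q1.support.tail ++ (r.reverse.support ++ [a]) := by
    rw [hcs]
    conv_lhs => rw [hq1cons]
    rw [List.cons_append, List.tail_cons]
  have hps' : p.support = a :: (q1.support.tail ++ r.support) := by
    rw [hps]
    conv_lhs => rw [hq1cons]
    rw [List.cons_append]
  have h1 : List.Perm (r.reverse.support ++ [a]) (a :: r.support) := by
    rw [support_reverse]
    refine (List.perm_append_comm).trans ?_
    simpa using (List.reverse_perm r.support).cons a
  have h2 : List.Perm (q1.support.tail ++ (r.reverse.support ++ [a]))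
      (q1.support.tail ++ (a :: r.support)) := List.Perm.append_left _ h1
  have h3 : List.Perm (q1.support.tail ++ a :: r.support)
      (a :: (q1.support.tail ++ r.support)) := List.perm_middle
  have hperm : List.Perm c.support.tail p.support := by
    rw [htail, hps']
    exact h2.trans h3
  have hnodup : c.support.tail.Nodup := hperm.nodup_iff.mpr hp.support_nodup
  have hvc : v ∈ c.support := List.mem_of_mem_tail (hperm.mem_iff.mpr hv)
  set c' := c.rotate v hvc with hc'def
  have hrot : List.Perm c'.support.tail c.support.tail := (support_rotate c v hvc).perm
  have hperm' : List.Perm c'.support.tail p.support := hrot.trans hperm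
  have hc'len : c'.length = p.length + 1 := by
    have h1 : c'.support.length = c'.length + 1 := length_support c'
    have h2 : c'.support = v :: c'.support.tail := support_eq_cons c'
    have h3 : c'.support.tail.length = p.support.length := hperm'.length_eq
    rw [length_support] at h3
    rw [h2] at h1
    simp only [List.length_cons] at h1
    omega
  have hc'nil : ¬ c'.Nil := by
    rw [nil_iff_length_eq, hc'len]
    omega
  obtain ⟨u2, hvu2, q, hc'⟩ := not_nil_iff.mp hc'nil
  have hqsupp : q.support = c'.support.tail := by rw [hc', support_cons, List.tail_cons]
  have hqperm : List.Perm q.support p.support := hqsupp ▸ hperm'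
  have hqpath : q.IsPath := IsPath.mk' (hqperm.nodup_iff.mpr hp.support_nodup)
  have hqlen : q.length = p.length := by
    have := hc'len
    rw [hc', length_cons] at this
    omega
  refine ⟨w, u2, Walk.cons hw.symm q.reverse, ?_, ?_, ?_⟩
  · refine IsPath.mk' ?_
    rw [support_cons, List.nodup_cons]
    constructor
    · rw [support_reverse, List.mem_reverse]
      intro hwq
      exact hwp (hqperm.mem_iff.mp hwq)
    · rw [support_reverse]
      exact (List.nodup_reverse).mpr hqpath.support_nodup
  · rw [length_cons, length_reverse, hqlen]
  · rw [support_cons]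
    refine List.mem_cons_of_mem _ ?_
    rw [support_reverse, List.mem_reverse]
    exact q.end_mem_support

end SimpleGraph.Walk

open SimpleGraph Walk in
/-- If `k ≥ 1` and `G` has minimum degree at least `k/2` and maximum degree at least
`2k`, then `G` contains a path with `k` edges. -/
theorem path_of_min_max_degree {V : Type*} [Fintype V]
    (G : SimpleGraph V) (k : ℕ) (hk : 1 ≤ k)
    (hmin : ∀ v, k ≤ 2 * (G.neighborSet v).ncard)
    (hmax : ∃ v, 2 * k ≤ (G.neighborSet v).ncard) :
    ∃ (u v : V) (p : G.Walk u v), p.IsPath ∧ p.length = k := by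
  classical
  obtain ⟨v, hv⟩ := hmax
  suffices h : ∀ m, m ≤ k → ∃ (a b : V) (p : G.Walk a b),
      p.IsPath ∧ p.length = m ∧ v ∈ p.support by
    obtain ⟨a, b, p, h1, h2, _⟩ := h k le_rfl
    exact ⟨a, b, p, h1, h2⟩
  intro m
  induction m with
  | zero => exact fun _ => ⟨v, v, Walk.nil, IsPath.nil, rfl, by simp⟩
  | succ m ih =>
    intro hm
    obtain ⟨a, b, p, hp, hlen, hvp⟩ := ih (by omega)
    by_cases ha : ∃ z, G.Adj a z ∧ z ∉ p.support
    · obtain ⟨z, haz, hzp⟩ := ha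
      exact ⟨z, b, Walk.cons haz.symm p, hp.cons hzp, by rw [length_cons, hlen],
        by rw [support_cons]; exact List.mem_cons_of_mem _ hvp⟩
    by_cases hb : ∃ z, G.Adj b z ∧ z ∉ p.support
    · obtain ⟨z, hbz, hzp⟩ := hb
      refine ⟨z, a, Walk.cons hbz.symm p.reverse, hp.reverse.cons ?_,
        by rw [length_cons, length_reverse, hlen], ?_⟩
      · rw [support_reverse, List.mem_reverse]; exact hzp
      · rw [support_cons]
        exact List.mem_cons_of_mem _ (by rw [support_reverse, List.mem_reverse]; exact hvp)
    push_neg at ha hb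
    have ha' : ∀ z, G.Adj a z → z ∈ p.support := fun z hz => ha z hz
    have hb' : ∀ z, G.Adj b z → z ∈ p.support := fun z hz => hb z hz
    -- degree bounds
    have hda : (G.neighborSet a).ncard ≤ m :=
      hlen ▸ ncard_le_length hp p.start_mem_support ha'
    have hdb : (G.neighborSet b).ncard ≤ m :=
      hlen ▸ ncard_le_length hp p.end_mem_support hb'
    -- v has a neighbor off the path
    have hwex : ∃ w, G.Adj v w ∧ w ∉ p.support := by
      by_contra hcon
      push_neg at hcon
      have := ncard_le_length hp hvp (fun z hz => hcon z hz)
      have h2k := hv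
      omega
    obtain ⟨w, hvw, hwp⟩ := hwex
    -- pigeonhole for a crossing pair
    set A := (Finset.range m).filter (fun i => G.Adj a (p.getVert (i+1))) with hAdef
    set B := (Finset.range m).filter (fun i => G.Adj b (p.getVert i)) with hBdef
    have hcardA : (G.neighborSet a).ncard ≤ A.card := by
      have hsub : G.neighborSet a ⊆ ↑(A.image (fun i => p.getVert (i+1))) := by
        intro z hz
        have hz' : G.Adj a z := hz
        obtain ⟨j, hj1, hj2⟩ := mem_support_iff_exists_getVert.mp (ha' z hz')
        have hj0 : j ≠ 0 := by
          rintro rfl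
          rw [getVert_zero] at hj1
          exact G.loopless.irrefl a (hj1 ▸ hz')
        have hjeq : j - 1 + 1 = j := by omega
        refine Finset.mem_coe.mpr (Finset.mem_image.mpr ⟨j - 1, ?_, ?_⟩)
        · rw [hAdef, Finset.mem_filter, Finset.mem_range]
          refine ⟨by omega, ?_⟩
          rw [hjeq, hj1]
          exact hz'
        · rw [hjeq]; exact hj1
      calc (G.neighborSet a).ncard
          ≤ ((A.image (fun i => p.getVert (i+1)) : Finset V) : Set V).ncard :=
            Set.ncard_le_ncard hsub (Set.toFinite _)
        _ = (A.image (fun i => p.getVert (i+1))).card := Set.ncard_coe_finset _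
        _ ≤ A.card := Finset.card_image_le
    have hcardB : (G.neighborSet b).ncard ≤ B.card := by
      have hsub : G.neighborSet b ⊆ ↑(B.image (fun i => p.getVert i)) := by
        intro z hz
        have hz' : G.Adj b z := hz
        obtain ⟨j, hj1, hj2⟩ := mem_support_iff_exists_getVert.mp (hb' z hz')
        have hjm : j ≠ p.length := by
          rintro rfl
          rw [getVert_length] at hj1
          exact G.loopless.irrefl b (hj1 ▸ hz')
        refine Finset.mem_coe.mpr (Finset.mem_image.mpr ⟨j, ?_, hj1⟩)
        rw [hBdef, Finset.mem_filter, Finset.mem_range]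
        exact ⟨by omega, hj1 ▸ hz'⟩
      calc (G.neighborSet b).ncard
          ≤ ((B.image (fun i => p.getVert i) : Finset V) : Set V).ncard :=
            Set.ncard_le_ncard hsub (Set.toFinite _)
        _ = (B.image (fun i => p.getVert i)).card := Set.ncard_coe_finset _
        _ ≤ B.card := Finset.card_image_le
    have hka : k ≤ 2 * (G.neighborSet a).ncard := hmin a
    have hkb : k ≤ 2 * (G.neighborSet b).ncard := hmin b
    have hsum : m + 1 ≤ A.card + B.card := by omega
    have hunion : (A ∪ B).card ≤ m := by
      refine le_trans (Finset.card_le_card ?_) (by rw [Finset.card_range])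
      intro i hi
      rcases Finset.mem_union.mp hi with h | h
      · exact Finset.mem_of_mem_filter i h
      · exact Finset.mem_of_mem_filter i h
    have hinter : (A ∩ B).Nonempty := by
      rw [← Finset.card_pos]
      have := Finset.card_union_add_card_inter A B
      omega
    obtain ⟨i, hi⟩ := hinter
    rw [Finset.mem_inter, hAdef, hBdef, Finset.mem_filter, Finset.mem_filter,
      Finset.mem_range] at hi
    obtain ⟨⟨him, hiA⟩, _, hiB⟩ := hi
    obtain ⟨s, t, F, hF1, hF2, hF3⟩ :=
      rotation_step hp (by omega : i < p.length) hiA hiB hvp hvw hwp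
    exact ⟨s, t, F, hF1, by rw [hF2, hlen], hF3⟩
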